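/- Let x: M^n → Q^{n+1}_+ (n ≥ 1) be a spacelike frontal. Then the pull-back symmetric bilinear form ⟨dx, dx⟩ is non-degenerate at a point if and only if the Gauss map G_+ = Π_+ ∘ x is an immersion there; in particular, wherever ⟨dx,dx⟩ is non-degenerate, x itself is an immersion. -/

import Mathlib

open scoped Manifold

noncomputable section

/-- The Lorentz–Minkowski inner product of signature `(-,+,…,+)` on `ℝ^{n+2}`. -/
def mink (n : ℕ) (z w : Fin (n + 2) → ℝ) : ℝ :=
  ∑ i, (if i = 0 then (-1 : ℝ) else 1) * z i * w i

/-- `x : Mⁿ → Q^{n+1}_+` is a spacelike frontal with dual `y : Mⁿ → Q^{n+1}_-`: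
`⟨x,x⟩ = ⟨y,y⟩ = 0`, `x⁰ > 0`, `y⁰ < 0`, `⟨x,y⟩ = 1` and `⟨dx,y⟩ = ⟨dy,x⟩ = 0`. -/
structure IsSpacelikeFrontalPair (n : ℕ) {M : Type*} [TopologicalSpace M]
    [ChartedSpace (EuclideanSpace ℝ (Fin n)) M] [IsManifold (𝓡 n) (⊤ : ℕ∞) M]
    (x y : M → Fin (n + 2) → ℝ) : Prop where
  smooth_x : ContMDiff (𝓡 n) 𝓘(ℝ, Fin (n + 2) → ℝ) (⊤ : ℕ∞) x
  smooth_y : ContMDiff (𝓡 n) 𝓘(ℝ, Fin (n + 2) → ℝ) (⊤ : ℕ∞) y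
  x_null : ∀ p, mink n (x p) (x p) = 0
  x_upper : ∀ p, 0 < x p 0
  y_null : ∀ p, mink n (y p) (y p) = 0
  y_lower : ∀ p, y p 0 < 0
  pairing : ∀ p, mink n (x p) (y p) = 1
  dx_y : ∀ p (v : TangentSpace (𝓡 n) p),
    mink n (mfderiv (𝓡 n) 𝓘(ℝ, Fin (n + 2) → ℝ) x p v) (y p) = 0
  dy_x : ∀ p (v : TangentSpace (𝓡 n) p),
    mink n (mfderiv (𝓡 n) 𝓘(ℝ, Fin (n + 2) → ℝ) y p v) (x p) = 0

namespace S4aux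

lemma mink_comm (n : ℕ) (z w : Fin (n+2) → ℝ) : mink n z w = mink n w z := by
  unfold mink; exact Finset.sum_congr rfl fun i _ => by ring

lemma mink_smul_left (n : ℕ) (a : ℝ) (z w : Fin (n+2) → ℝ) :
    mink n (a • z) w = a * mink n z w := by
  unfold mink; rw [Finset.mul_sum]
  exact Finset.sum_congr rfl fun i _ => by
    simp only [Pi.smul_apply, smul_eq_mul]; split_ifs <;> ring

lemma mink_add_left (n : ℕ) (z₁ z₂ w : Fin (n+2) → ℝ) :
    mink n (z₁ + z₂) w = mink n z₁ w + mink n z₂ w := by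
  unfold mink; rw [← Finset.sum_add_distrib]
  exact Finset.sum_congr rfl fun i _ => by
    simp only [Pi.add_apply]; split_ifs <;> ring

lemma mink_sub_left (n : ℕ) (z₁ z₂ w : Fin (n+2) → ℝ) :
    mink n (z₁ - z₂) w = mink n z₁ w - mink n z₂ w := by
  unfold mink; rw [← Finset.sum_sub_distrib]
  exact Finset.sum_congr rfl fun i _ => by
    simp only [Pi.sub_apply]; split_ifs <;> ring

lemma mink_zero_left (n : ℕ) (w : Fin (n+2) → ℝ) : mink n 0 w = 0 := by
  simp [mink]

/-- key pointwise algebra: a null vector orthogonal to both `x` and `y` vanishes. -/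
lemma null_ortho (n : ℕ) (x y z : Fin (n+2) → ℝ)
    (hx : mink n x x = 0) (hx0 : x 0 ≠ 0) (hxyp : mink n x y = 1)
    (hz : mink n z z = 0) (hzx : mink n z x = 0) (hzy : mink n z y = 0) :
    z = 0 := by
  have hww : (∑ i, (if i = 0 then (-1:ℝ) else 1) *
      (x 0 * z i - z 0 * x i) * (x 0 * z i - z 0 * x i)) = 0 := by
    have he : ∀ i : Fin (n+2), (if i = 0 then (-1:ℝ) else 1) *
        (x 0 * z i - z 0 * x i) * (x 0 * z i - z 0 * x i) =
        (x 0)^2 * ((if i = 0 then (-1:ℝ) else 1) * z i * z i)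
        - (2 * (x 0 * z 0)) * ((if i = 0 then (-1:ℝ) else 1) * z i * x i)
        + (z 0)^2 * ((if i = 0 then (-1:ℝ) else 1) * x i * x i) := by
      intro i; ring
    rw [Finset.sum_congr rfl fun i _ => he i]
    rw [Finset.sum_add_distrib, Finset.sum_sub_distrib, ← Finset.mul_sum, ← Finset.mul_sum,
      ← Finset.mul_sum]
    have hzz : (∑ i, (if i = 0 then (-1:ℝ) else 1) * z i * z i) = 0 := hz
    have hzx' : (∑ i, (if i = 0 then (-1:ℝ) else 1) * z i * x i) = 0 := hzx
    have hxx : (∑ i, (if i = 0 then (-1:ℝ) else 1) * x i * x i) = 0 := hx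
    rw [hzz, hzx', hxx]; ring
  have hw0 : x 0 * z 0 - z 0 * x 0 = 0 := by ring
  have hpropz : ∀ i, x 0 * z i - z 0 * x i = 0 := by
    have hnn : ∀ i ∈ Finset.univ, (0:ℝ) ≤ (if i = 0 then (-1:ℝ) else 1) *
        (x 0 * z i - z 0 * x i) * (x 0 * z i - z 0 * x i) := by
      intro i _
      by_cases h : i = 0
      · simp only [h, if_pos rfl, hw0]; ring_nf; exact le_refl 0
      · simp only [if_neg h, one_mul]; exact mul_self_nonneg _
    have hall := (Finset.sum_eq_zero_iff_of_nonneg hnn).1 hww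
    intro i
    by_cases h : i = 0
    · rw [h]; exact hw0
    · have := hall i (Finset.mem_univ i)
      rw [if_neg h, one_mul] at this
      exact mul_self_eq_zero.mp this
  have hzi : ∀ i, z i = (z 0 / x 0) * x i := by
    intro i
    rw [div_mul_eq_mul_div, eq_div_iff hx0]
    linear_combination hpropz i
  have hz0 : z 0 = 0 := by
    have hcalc : mink n z y = (z 0 / x 0) * mink n x y := by
      unfold mink; rw [Finset.mul_sum]
      refine Finset.sum_congr rfl fun i _ => ?_
      rw [hzi i]; ring
    rw [hzy, hxyp, mul_one] at hcalc
    rcases div_eq_zero_iff.mp hcalc.symm with h | h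
    · exact h
    · exact absurd h hx0
  funext i
  rw [hzi i, hz0]
  simp

/-- derivative of the Minkowski square. -/
lemma hasFDerivAt_minkSq (n : ℕ) (a : Fin (n+2) → ℝ) :
    HasFDerivAt (fun z => mink n z z)
      (∑ i : Fin (n+2), ((if i = 0 then (-1:ℝ) else 1) * (2 * a i)) •
        (ContinuousLinearMap.proj i : (Fin (n+2) → ℝ) →L[ℝ] ℝ)) a := by
  have key : ∀ i : Fin (n+2), HasFDerivAt (fun z : Fin (n+2) → ℝ =>
      (if i = 0 then (-1:ℝ) else 1) * z i * z i)
      (((if i = 0 then (-1:ℝ) else 1) * (2 * a i)) •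
        (ContinuousLinearMap.proj i : (Fin (n+2) → ℝ) →L[ℝ] ℝ)) a := by
    intro i
    have hp : HasFDerivAt (fun z : Fin (n+2) → ℝ => z i)
        (ContinuousLinearMap.proj i : (Fin (n+2) → ℝ) →L[ℝ] ℝ) a :=
      hasFDerivAt_apply i a
    have h1 := ((hp.const_mul ((if i = 0 then (-1:ℝ) else 1))).mul hp)
    refine h1.congr_fderiv ?_
    ext v
    simp only [ContinuousLinearMap.smul_apply, ContinuousLinearMap.proj_apply,
      ContinuousLinearMap.add_apply, smul_eq_mul]
    ring
  have hsum : HasFDerivAt (fun z : Fin (n+2) → ℝ =>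
      ∑ i, (if i = 0 then (-1:ℝ) else 1) * z i * z i)
      (∑ i : Fin (n+2), ((if i = 0 then (-1:ℝ) else 1) * (2 * a i)) •
        (ContinuousLinearMap.proj i : (Fin (n+2) → ℝ) →L[ℝ] ℝ)) a :=
    HasFDerivAt.fun_sum fun i _ => key i
  exact hsum

lemma minkDual_apply (n : ℕ) (a v : Fin (n+2) → ℝ) :
    (∑ i : Fin (n+2), ((if i = 0 then (-1:ℝ) else 1) * (2 * a i)) •
        (ContinuousLinearMap.proj i : (Fin (n+2) → ℝ) →L[ℝ] ℝ)) v = 2 * mink n a v := by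
  rw [ContinuousLinearMap.sum_apply]
  unfold mink
  rw [Finset.mul_sum]
  exact Finset.sum_congr rfl fun i _ => by
    simp only [ContinuousLinearMap.smul_apply, ContinuousLinearMap.proj_apply, smul_eq_mul]
    ring

/-- derivative of the Gauss projection `z ↦ (z 0)⁻¹ • z`. -/
lemma hasFDerivAt_gauss (n : ℕ) (a : Fin (n+2) → ℝ) (ha : a 0 ≠ 0) :
    HasFDerivAt (fun z : Fin (n+2) → ℝ => (z 0)⁻¹ • z)
      ((a 0)⁻¹ • ContinuousLinearMap.id ℝ (Fin (n+2) → ℝ) +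
        ((-(a 0 ^ 2)⁻¹) • (ContinuousLinearMap.proj 0 :
          (Fin (n+2) → ℝ) →L[ℝ] ℝ)).smulRight a) a := by
  have hp : HasFDerivAt (fun z : Fin (n+2) → ℝ => z 0)
      (ContinuousLinearMap.proj 0 : (Fin (n+2) → ℝ) →L[ℝ] ℝ) a :=
    hasFDerivAt_apply 0 a
  have hinv : HasFDerivAt (fun z : Fin (n+2) → ℝ => (z 0)⁻¹)
      ((-(a 0 ^ 2)⁻¹) • (ContinuousLinearMap.proj 0 : (Fin (n+2) → ℝ) →L[ℝ] ℝ)) a :=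
    (hasDerivAt_inv ha).comp_hasFDerivAt a hp
  exact hinv.smul (hasFDerivAt_id a)

lemma gauss_comp_apply {E : Type*} [AddCommGroup E] [Module ℝ E] [TopologicalSpace E]
    (n : ℕ) (a b : ℝ) (xp : Fin (n+2) → ℝ) (Dm : E →L[ℝ] (Fin (n+2) → ℝ)) (v : E) :
    ((a • ContinuousLinearMap.id ℝ (Fin (n+2) → ℝ) +
      (b • (ContinuousLinearMap.proj 0 : (Fin (n+2) → ℝ) →L[ℝ] ℝ)).smulRight xp).comp Dm) v =
      a • Dm v + (b * Dm v 0) • xp := by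
  simp [ContinuousLinearMap.comp_apply, ContinuousLinearMap.add_apply,
    ContinuousLinearMap.smul_apply, ContinuousLinearMap.smulRight_apply,
    ContinuousLinearMap.proj_apply, smul_smul]

end S4aux

theorem statement4 (n : ℕ) (hn : 1 ≤ n) {M : Type*} [TopologicalSpace M]
    [ChartedSpace (EuclideanSpace ℝ (Fin n)) M] [IsManifold (𝓡 n) (⊤ : ℕ∞) M]
    (x y : M → Fin (n + 2) → ℝ) (hxy : IsSpacelikeFrontalPair n x y) (p : M) :
    ((∀ v : TangentSpace (𝓡 n) p,
        (∀ w : TangentSpace (𝓡 n) p,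
          mink n (mfderiv (𝓡 n) 𝓘(ℝ, Fin (n + 2) → ℝ) x p v)
            (mfderiv (𝓡 n) 𝓘(ℝ, Fin (n + 2) → ℝ) x p w) = 0) → v = 0) ↔
      Function.Injective
        (mfderiv (𝓡 n) 𝓘(ℝ, Fin (n + 2) → ℝ) (fun q => (x q 0)⁻¹ • x q) p)) ∧
    ((∀ v : TangentSpace (𝓡 n) p,
        (∀ w : TangentSpace (𝓡 n) p,
          mink n (mfderiv (𝓡 n) 𝓘(ℝ, Fin (n + 2) → ℝ) x p v)
            (mfderiv (𝓡 n) 𝓘(ℝ, Fin (n + 2) → ℝ) x p w) = 0) → v = 0) →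
      Function.Injective (mfderiv (𝓡 n) 𝓘(ℝ, Fin (n + 2) → ℝ) x p)) := by
  classical
  have hx0 : x p 0 ≠ 0 := ne_of_gt (hxy.x_upper p)
  set D := mfderiv (𝓡 n) 𝓘(ℝ, Fin (n + 2) → ℝ) x p with hDdef
  have hxd : MDifferentiableAt (𝓡 n) 𝓘(ℝ, Fin (n + 2) → ℝ) x p :=
    (hxy.smooth_x.mdifferentiable (by simp)) p
  -- Step A : the derivative is mink-orthogonal to x p
  have hA : ∀ v : TangentSpace (𝓡 n) p, mink n (D v) (x p) = 0 := by
    intro v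
    have hF := S4aux.hasFDerivAt_minkSq n (x p)
    have hFd : MDifferentiableAt 𝓘(ℝ, Fin (n + 2) → ℝ) 𝓘(ℝ, ℝ)
        (fun z => mink n z z) (x p) := hF.differentiableAt.mdifferentiableAt
    have hcomp := mfderiv_comp p hFd hxd
    have hconst : ((fun z => mink n z z) ∘ x) = fun _ : M => (0 : ℝ) :=
      funext fun q => hxy.x_null q
    rw [hconst, mfderiv_const] at hcomp
    have hmf : mfderiv 𝓘(ℝ, Fin (n + 2) → ℝ) 𝓘(ℝ, ℝ) (fun z => mink n z z) (x p) =
        ∑ i : Fin (n+2), ((if i = 0 then (-1:ℝ) else 1) * (2 * x p i)) •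
          (ContinuousLinearMap.proj i : (Fin (n+2) → ℝ) →L[ℝ] ℝ) := by
      rw [mfderiv_eq_fderiv]; exact hF.fderiv
    rw [hmf] at hcomp
    have h2 : ((∑ i : Fin (n+2), ((if i = 0 then (-1:ℝ) else 1) * (2 * x p i)) •
        (ContinuousLinearMap.proj i : (Fin (n+2) → ℝ) →L[ℝ] ℝ)).comp
        (mfderiv (𝓡 n) 𝓘(ℝ, Fin (n + 2) → ℝ) x p)) v = 0 :=
      (congrArg (fun L => L v) hcomp.symm).trans (ContinuousLinearMap.zero_apply v)
    have h2' : (∑ i : Fin (n+2), ((if i = 0 then (-1:ℝ) else 1) * (2 * x p i)) •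
        (ContinuousLinearMap.proj i : (Fin (n+2) → ℝ) →L[ℝ] ℝ))
        (mfderiv (𝓡 n) 𝓘(ℝ, Fin (n + 2) → ℝ) x p v) = 0 :=
      (ContinuousLinearMap.comp_apply _ _ v).symm.trans h2
    have h4 : 2 * mink n (x p) (D v) = 0 :=
      (S4aux.minkDual_apply n (x p) (D v)).symm.trans h2'
    have h5 := S4aux.mink_comm n (D v) (x p)
    linarith
  -- Step B : orthogonal to y p
  have hB : ∀ v : TangentSpace (𝓡 n) p, mink n (D v) (y p) = 0 := hxy.dx_y p
  -- Step C : degenerate vectors have vanishing derivative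
  have hC : ∀ v : TangentSpace (𝓡 n) p, mink n (D v) (D v) = 0 → D v = 0 := fun v hv =>
    S4aux.null_ortho n (x p) (y p) (D v) (hxy.x_null p) hx0 (hxy.pairing p) hv (hA v) (hB v)
  -- nondegeneracy ↔ trivial kernel of D
  have main : (∀ v : TangentSpace (𝓡 n) p,
      (∀ w : TangentSpace (𝓡 n) p, mink n (D v) (D w) = 0) → v = 0) ↔
      (∀ v : TangentSpace (𝓡 n) p, D v = 0 → v = 0) := by
    constructor
    · intro h v hv
      exact h v fun w => by rw [hv]; exact S4aux.mink_zero_left n _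
    · intro h v hv
      exact h v (hC v (hv v))
  have hinjD : Function.Injective D ↔ ∀ v : TangentSpace (𝓡 n) p, D v = 0 → v = 0 := by
    constructor
    · intro h v hv
      exact h (hv.trans (map_zero D).symm)
    · intro h a b hab
      have h1 : D (a - b) = 0 := by rw [map_sub, hab, sub_self]
      exact sub_eq_zero.mp (h _ h1)
  -- Gauss map derivative
  have hgd := S4aux.hasFDerivAt_gauss n (x p) hx0
  have hgmd : MDifferentiableAt 𝓘(ℝ, Fin (n + 2) → ℝ) 𝓘(ℝ, Fin (n + 2) → ℝ)
      (fun z : Fin (n+2) → ℝ => (z 0)⁻¹ • z) (x p) :=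
    hgd.differentiableAt.mdifferentiableAt
  have hcompG := mfderiv_comp p hgmd hxd
  have hGfun : ((fun z : Fin (n+2) → ℝ => (z 0)⁻¹ • z) ∘ x) =
      (fun q => (x q 0)⁻¹ • x q) := rfl
  rw [hGfun] at hcompG
  have hgfd : mfderiv 𝓘(ℝ, Fin (n + 2) → ℝ) 𝓘(ℝ, Fin (n + 2) → ℝ)
      (fun z : Fin (n+2) → ℝ => (z 0)⁻¹ • z) (x p) =
      ((x p 0)⁻¹ • ContinuousLinearMap.id ℝ (Fin (n+2) → ℝ) +
        ((-(x p 0 ^ 2)⁻¹) • (ContinuousLinearMap.proj 0 :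
          (Fin (n+2) → ℝ) →L[ℝ] ℝ)).smulRight (x p)) := by
    rw [mfderiv_eq_fderiv]; exact hgd.fderiv
  rw [hgfd] at hcompG
  -- kernel of the Gauss differential equals kernel of D
  have hker : ∀ v : TangentSpace (𝓡 n) p,
      mfderiv (𝓡 n) 𝓘(ℝ, Fin (n + 2) → ℝ) (fun q => (x q 0)⁻¹ • x q) p v = 0 ↔ D v = 0 := by
    intro v
    have h1 := S4aux.gauss_comp_apply n ((x p 0)⁻¹) (-(x p 0 ^ 2)⁻¹) (x p)
      (mfderiv (𝓡 n) 𝓘(ℝ, Fin (n + 2) → ℝ) x p) v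
    constructor
    · intro h0
      obtain ⟨u, hu⟩ : ∃ u : Fin (n+2) → ℝ,
          mfderiv (𝓡 n) 𝓘(ℝ, Fin (n + 2) → ℝ) x p v = u := ⟨_, rfl⟩
      have hfull : (x p 0)⁻¹ • u + (-(x p 0 ^ 2)⁻¹ * u 0) • x p = 0 := by
        rw [← hu]
        exact h1.symm.trans ((congrArg (fun L => L v) hcompG).symm.trans h0)
      have hByu : mink n u (y p) = 0 := by rw [← hu]; exact hB v
      have h2 := congrArg (fun z : Fin (n+2) → ℝ => mink n z (y p)) hfull
      rw [S4aux.mink_add_left, S4aux.mink_smul_left, S4aux.mink_smul_left,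
        S4aux.mink_zero_left, hByu, hxy.pairing p, mul_zero, mul_one] at h2
      have hu0 : u 0 = 0 := by
        have hne : (-(x p 0 ^ 2)⁻¹ : ℝ) ≠ 0 := by
          simp [pow_eq_zero_iff, hx0]
        have hmul : (-(x p 0 ^ 2)⁻¹ * u 0 : ℝ) = 0 := by linarith
        exact (mul_eq_zero.mp hmul).resolve_left hne
      rw [hu0, mul_zero, zero_smul, add_zero] at hfull
      rcases smul_eq_zero.mp hfull with h | h
      · exact absurd (inv_eq_zero.mp h) hx0
      · exact hu.trans h
    · intro h0
      have hz : mfderiv (𝓡 n) 𝓘(ℝ, Fin (n + 2) → ℝ) x p v = (0 : Fin (n+2) → ℝ) := h0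
      have h2 := congrArg (fun z : Fin (n+2) → ℝ =>
          (x p 0)⁻¹ • z + (-(x p 0 ^ 2)⁻¹ * z 0) • x p) hz
      simp only [smul_zero, Pi.zero_apply, mul_zero, zero_smul, add_zero] at h2
      exact (congrArg (fun L => L v) hcompG).trans (h1.trans h2)
  have hinjG : Function.Injective
      (mfderiv (𝓡 n) 𝓘(ℝ, Fin (n + 2) → ℝ) (fun q => (x q 0)⁻¹ • x q) p) ↔
      (∀ v : TangentSpace (𝓡 n) p, D v = 0 → v = 0) := by
    constructor
    · intro h v hv
      have : mfderiv (𝓡 n) 𝓘(ℝ, Fin (n + 2) → ℝ) (fun q => (x q 0)⁻¹ • x q) p v = 0 :=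
        (hker v).mpr hv
      exact h (this.trans
        (map_zero (mfderiv (𝓡 n) 𝓘(ℝ, Fin (n + 2) → ℝ) (fun q => (x q 0)⁻¹ • x q) p)).symm)
    · intro h a b hab
      have h1 : mfderiv (𝓡 n) 𝓘(ℝ, Fin (n + 2) → ℝ) (fun q => (x q 0)⁻¹ • x q) p (a - b) = 0 := by
        rw [map_sub, hab, sub_self]
      exact sub_eq_zero.mp (h _ ((hker _).mp h1))
  exact ⟨main.trans hinjG.symm, fun h => hinjD.mpr (main.mp h)⟩
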